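/- Suppose a : primes → ℝ satisfies ∑_{p ≤ x} a(p) = o(x/log x), ∑_{p ≤ x} a(p)² ∼ x/log x, and ∑_{p ≤ x} a(p)⁴ ∼ 2x/log x. Then for every sufficiently large x, the interval (x, 2x] contains a prime p with a(p) < 0 and a prime q with a(q) > 0. In particular the sequence a(p) changes sign infinitely often. -/

import Mathlib

open Finset Filter Asymptotics

private lemma cs4_aux (s : Finset ℕ) (b : ℕ → ℝ) (hb : ∀ i ∈ s, 0 ≤ b i) :
    (∑ i ∈ s, b i ^ 2) ^ 4 ≤ (∑ i ∈ s, b i) ^ 2 * ((∑ i ∈ s, b i ^ 2) * (∑ i ∈ s, b i ^ 4)) := by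
  have hA : (∑ i ∈ s, b i ^ 2) ^ 2 ≤ (∑ i ∈ s, b i) * (∑ i ∈ s, b i ^ 3) := by
    calc (∑ i ∈ s, b i ^ 2) ^ 2
        = (∑ i ∈ s, Real.sqrt (b i) * (Real.sqrt (b i) * b i)) ^ 2 := by
          congr 1
          refine Finset.sum_congr rfl fun i hi => ?_
          rw [← mul_assoc, Real.mul_self_sqrt (hb i hi)]; ring
      _ ≤ (∑ i ∈ s, Real.sqrt (b i) ^ 2) * ∑ i ∈ s, (Real.sqrt (b i) * b i) ^ 2 :=
          Finset.sum_mul_sq_le_sq_mul_sq s _ _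
      _ = (∑ i ∈ s, b i) * (∑ i ∈ s, b i ^ 3) := by
          congr 1
          · exact Finset.sum_congr rfl fun i hi => Real.sq_sqrt (hb i hi)
          · refine Finset.sum_congr rfl fun i hi => ?_
            rw [mul_pow, Real.sq_sqrt (hb i hi)]; ring
  have hB : (∑ i ∈ s, b i ^ 3) ^ 2 ≤ (∑ i ∈ s, b i ^ 2) * (∑ i ∈ s, b i ^ 4) := by
    have h := Finset.sum_mul_sq_le_sq_mul_sq s (fun i => b i) (fun i => b i ^ 2)
    calc (∑ i ∈ s, b i ^ 3) ^ 2 = (∑ i ∈ s, b i * b i ^ 2) ^ 2 := by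
          congr 1; exact Finset.sum_congr rfl fun i _ => by ring
      _ ≤ (∑ i ∈ s, b i ^ 2) * ∑ i ∈ s, (b i ^ 2) ^ 2 := h
      _ = (∑ i ∈ s, b i ^ 2) * (∑ i ∈ s, b i ^ 4) := by
          congr 1; exact Finset.sum_congr rfl fun i _ => by ring
  have hs1 : 0 ≤ ∑ i ∈ s, b i := Finset.sum_nonneg hb
  have hs3 : 0 ≤ ∑ i ∈ s, b i ^ 3 := Finset.sum_nonneg fun i hi => pow_nonneg (hb i hi) 3
  calc (∑ i ∈ s, b i ^ 2) ^ 4 = ((∑ i ∈ s, b i ^ 2) ^ 2) ^ 2 := by ring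
    _ ≤ ((∑ i ∈ s, b i) * (∑ i ∈ s, b i ^ 3)) ^ 2 := pow_le_pow_left₀ (sq_nonneg _) hA 2
    _ = (∑ i ∈ s, b i) ^ 2 * (∑ i ∈ s, b i ^ 3) ^ 2 := by ring
    _ ≤ (∑ i ∈ s, b i) ^ 2 * ((∑ i ∈ s, b i ^ 2) * (∑ i ∈ s, b i ^ 4)) :=
        mul_le_mul_of_nonneg_left hB (sq_nonneg _)

private lemma sum_split_aux (f : ℕ → ℝ) (x : ℕ) :
    ∑ p ∈ (Finset.range (2 * x + 1)).filter Nat.Prime, f p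
      = ∑ p ∈ (Finset.range (x + 1)).filter Nat.Prime, f p
        + ∑ p ∈ (Finset.Ioc x (2 * x)).filter Nat.Prime, f p := by
  rw [Finset.sum_filter, Finset.sum_filter, Finset.sum_filter, Finset.range_eq_Ico,
      Finset.range_eq_Ico, ← Finset.Ico_add_one_add_one_eq_Ioc]
  exact (Finset.sum_Ico_consecutive (fun a => if Nat.Prime a then f a else 0) (m := 0) (n := x + 1) (k := 2 * x + 1) (by omega) (by omega)).symm

private lemma numeric_aux (L S1 S2 S4 : ℝ) (hL : 0 < L) (h1 : |S1| ≤ 1 / 10 * L)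
    (h2 : |S2 - L| ≤ 1 / 2 * L) (h4 : |S4 - 2 * L| ≤ L)
    (hcs : S2 ^ 4 ≤ S1 ^ 2 * (S2 * S4)) : False := by
  obtain ⟨h1a, h1b⟩ := abs_le.1 h1
  obtain ⟨h2a, h2b⟩ := abs_le.1 h2
  obtain ⟨h4a, h4b⟩ := abs_le.1 h4
  have hS2 : L / 2 ≤ S2 := by linarith
  have hS1sq : S1 ^ 2 ≤ (1 / 10 * L) ^ 2 := by nlinarith
  have h24 : (L / 2) ^ 4 ≤ S2 ^ 4 := pow_le_pow_left₀ (by positivity) hS2 4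
  have hprod : S2 * S4 ≤ 3 / 2 * L * (3 * L) := by nlinarith
  have hr : S1 ^ 2 * (S2 * S4) ≤ (1 / 10 * L) ^ 2 * (3 / 2 * L * (3 * L)) :=
    mul_le_mul hS1sq hprod (by nlinarith) (by positivity)
  nlinarith [pow_pos hL 4]

noncomputable def Lfun : ℕ → ℝ := fun x => (x : ℝ) / Real.log x

private lemma htwo_aux : Tendsto (fun x : ℕ => 2 * x) atTop atTop :=
  tendsto_atTop_mono (fun n => Nat.le_mul_of_pos_left n (by norm_num)) tendsto_id

private lemma hlog2x_aux : Tendsto (fun x : ℕ => Real.log ((2 * x : ℕ) : ℝ)) atTop atTop :=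
  Real.tendsto_log_atTop.comp (tendsto_natCast_atTop_atTop.comp htwo_aux)

private lemma hL2_aux : (fun x : ℕ => Lfun (2 * x) - 2 * Lfun x) =o[atTop] Lfun := by
  have hsmall : (fun x : ℕ => Lfun x / Real.log ((2 * x : ℕ) : ℝ)) =o[atTop] Lfun := by
    have h0 : Tendsto (fun x : ℕ => (Real.log ((2 * x : ℕ) : ℝ))⁻¹) atTop (nhds 0) :=
      hlog2x_aux.inv_tendsto_atTop
    have h1 : (fun x : ℕ => (Real.log ((2 * x : ℕ) : ℝ))⁻¹) =o[atTop] (fun _ => (1 : ℝ)) :=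
      (isLittleO_one_iff ℝ).mpr h0
    have := (isBigO_refl Lfun atTop).mul_isLittleO h1
    simpa [div_eq_mul_inv] using this
  have heq : ∀ᶠ x : ℕ in atTop,
      -(2 * Real.log 2) * (Lfun x / Real.log ((2 * x : ℕ) : ℝ)) = Lfun (2 * x) - 2 * Lfun x := by
    filter_upwards [eventually_ge_atTop 2] with x hx
    have hx1 : (1 : ℝ) < (x : ℝ) := by exact_mod_cast Nat.lt_of_lt_of_le one_lt_two hx
    have hx0 : (0 : ℝ) < (x : ℝ) := by linarith
    have hlx : 0 < Real.log x := Real.log_pos hx1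
    have hl2 : Real.log ((2 * x : ℕ) : ℝ) = Real.log 2 + Real.log x := by
      push_cast
      rw [Real.log_mul two_ne_zero (ne_of_gt hx0)]
    have hl2pos : 0 < Real.log ((2 * x : ℕ) : ℝ) := by
      rw [hl2]; positivity
    simp only [Lfun]
    rw [hl2]
    push_cast
    have hden : Real.log 2 + Real.log (x:ℝ) ≠ 0 := by positivity
    field_simp
    ring
  exact ((hsmall.const_mul_left (-(2 * Real.log 2))).congr' heq EventuallyEq.rfl)

private lemma hLO_aux : (fun x : ℕ => Lfun (2 * x)) =O[atTop] Lfun := by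
  have h := ((isBigO_refl Lfun atTop).const_mul_left 2).add hL2_aux.isBigO
  exact h.congr' (Filter.Eventually.of_forall fun x => by ring) EventuallyEq.rfl

/-- If `∑_{p ≤ x} a(p) = o(x/log x)`, `∑_{p ≤ x} a(p)² ∼ x/log x` and
`∑_{p ≤ x} a(p)⁴ ∼ 2x/log x`, then for every sufficiently large `x` the interval
`(x, 2x]` contains a prime `p` with `a(p) < 0` and a prime `q` with `a(q) > 0`;
in particular `a(p)` changes sign infinitely often. -/
theorem sign_changes_in_dyadic_intervals (a : ℕ → ℝ)
    (h1 : (fun x : ℕ => ∑ p ∈ (Finset.range (x + 1)).filter Nat.Prime, a p)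
        =o[atTop] fun x : ℕ => (x : ℝ) / Real.log x)
    (h2 : (fun x : ℕ => ∑ p ∈ (Finset.range (x + 1)).filter Nat.Prime, (a p) ^ 2)
        ~[atTop] fun x : ℕ => (x : ℝ) / Real.log x)
    (h4 : (fun x : ℕ => ∑ p ∈ (Finset.range (x + 1)).filter Nat.Prime, (a p) ^ 4)
        ~[atTop] fun x : ℕ => 2 * (x : ℝ) / Real.log x) :
    (∀ᶠ x : ℕ in atTop,
        (∃ p ∈ Finset.Ioc x (2 * x), p.Prime ∧ a p < 0) ∧
        (∃ q ∈ Finset.Ioc x (2 * x), q.Prime ∧ 0 < a q)) ∧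
    {p : ℕ | p.Prime ∧ a p < 0}.Infinite ∧
    {p : ℕ | p.Prime ∧ 0 < a p}.Infinite := by
  have hLpos : ∀ᶠ x : ℕ in atTop, 0 < Lfun x := by
    filter_upwards [eventually_ge_atTop 2] with x hx
    have hx1 : (1 : ℝ) < (x : ℝ) := by exact_mod_cast Nat.lt_of_lt_of_le one_lt_two hx
    exact div_pos (by linarith) (Real.log_pos hx1)
  set F1 : ℕ → ℝ := fun x => ∑ p ∈ (Finset.range (x + 1)).filter Nat.Prime, a p with hF1
  set F2 : ℕ → ℝ := fun x => ∑ p ∈ (Finset.range (x + 1)).filter Nat.Prime, (a p) ^ 2 with hF2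
  set F4 : ℕ → ℝ := fun x => ∑ p ∈ (Finset.range (x + 1)).filter Nat.Prime, (a p) ^ 4 with hF4
  have h1' : F1 =o[atTop] Lfun := h1
  have h2' : (fun x => F2 x - Lfun x) =o[atTop] Lfun := h2.isLittleO
  have h4' : (fun x => F4 x - 2 * Lfun x) =o[atTop] Lfun := by
    have hgO : (fun x : ℕ => 2 * (x : ℝ) / Real.log x) =O[atTop] Lfun := by
      have h := (isBigO_refl Lfun atTop).const_mul_left 2
      exact h.congr' (Filter.Eventually.of_forall fun x => by
        simp only [Lfun]; ring) EventuallyEq.rfl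
    have h := h4.isLittleO.trans_isBigO hgO
    exact h.congr' (Filter.Eventually.of_forall fun x => by
      simp only [Pi.sub_apply, Lfun]; ring) EventuallyEq.rfl
  have c1 : (fun x : ℕ => F1 (2 * x)) =o[atTop] Lfun :=
    (h1'.comp_tendsto htwo_aux).trans_isBigO hLO_aux
  have c2 : (fun x : ℕ => F2 (2 * x) - Lfun (2 * x)) =o[atTop] Lfun :=
    ((h2'.comp_tendsto htwo_aux).trans_isBigO hLO_aux).congr'
      (Filter.Eventually.of_forall fun x => by simp [Function.comp]) EventuallyEq.rfl
  have c4 : (fun x : ℕ => F4 (2 * x) - 2 * Lfun (2 * x)) =o[atTop] Lfun :=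
    ((h4'.comp_tendsto htwo_aux).trans_isBigO hLO_aux).congr'
      (Filter.Eventually.of_forall fun x => by simp [Function.comp]) EventuallyEq.rfl
  have hG1 : (fun x : ℕ => F1 (2 * x) - F1 x) =o[atTop] Lfun := c1.sub h1'
  have hG2 : (fun x : ℕ => (F2 (2 * x) - F2 x) - Lfun x) =o[atTop] Lfun := by
    have h := (c2.sub h2').add hL2_aux
    exact h.congr' (Filter.Eventually.of_forall fun x => by ring) EventuallyEq.rfl
  have hG4 : (fun x : ℕ => (F4 (2 * x) - F4 x) - 2 * Lfun x) =o[atTop] Lfun := by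
    have h := (c4.sub h4').add (hL2_aux.const_mul_left 2)
    exact h.congr' (Filter.Eventually.of_forall fun x => by ring) EventuallyEq.rfl
  have key : ∀ᶠ x : ℕ in atTop,
      (∃ p ∈ Finset.Ioc x (2 * x), p.Prime ∧ a p < 0) ∧
      (∃ q ∈ Finset.Ioc x (2 * x), q.Prime ∧ 0 < a q) := by
    have b1 := hG1.def (by norm_num : (0:ℝ) < 1/10)
    have b2 := hG2.def (by norm_num : (0:ℝ) < 1/2)
    have b4 := hG4.def (by norm_num : (0:ℝ) < 1)
    filter_upwards [b1, b2, b4, hLpos] with x e1 e2 e4 eL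
    set s := (Finset.Ioc x (2 * x)).filter Nat.Prime with hs
    have s1 : F1 (2 * x) - F1 x = ∑ p ∈ s, a p := by
      have := sum_split_aux a x; simp only [hF1, hs]; linarith
    have s2 : F2 (2 * x) - F2 x = ∑ p ∈ s, (a p) ^ 2 := by
      have := sum_split_aux (fun p => (a p) ^ 2) x; simp only [hF2, hs]; linarith
    have s4 : F4 (2 * x) - F4 x = ∑ p ∈ s, (a p) ^ 4 := by
      have := sum_split_aux (fun p => (a p) ^ 4) x; simp only [hF4, hs]; linarith
    rw [Real.norm_eq_abs, Real.norm_eq_abs, abs_of_pos eL, s1] at e1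
    rw [Real.norm_eq_abs, Real.norm_eq_abs, abs_of_pos eL, s2] at e2
    rw [Real.norm_eq_abs, Real.norm_eq_abs, abs_of_pos eL, s4, one_mul] at e4
    constructor
    · by_contra hno
      push_neg at hno
      have hnn : ∀ i ∈ s, 0 ≤ a i := by
        intro i hi
        rw [hs, Finset.mem_filter] at hi
        exact hno i hi.1 hi.2
      exact numeric_aux (Lfun x) _ _ _ eL e1 e2 e4 (cs4_aux s a hnn)
    · by_contra hno
      push_neg at hno
      have hnn : ∀ i ∈ s, 0 ≤ -a i := by
        intro i hi
        rw [hs, Finset.mem_filter] at hi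
        simpa using hno i hi.1 hi.2
      have hcs := cs4_aux s (fun p => -a p) hnn
      have hcs' : (∑ p ∈ s, (a p) ^ 2) ^ 4
          ≤ (-(∑ p ∈ s, a p)) ^ 2 * ((∑ p ∈ s, (a p) ^ 2) * (∑ p ∈ s, (a p) ^ 4)) := by
        rw [show (∑ p ∈ s, (a p) ^ 2) = ∑ p ∈ s, (-a p) ^ 2 from
              Finset.sum_congr rfl fun i _ => by ring,
            show (∑ p ∈ s, (a p) ^ 4) = ∑ p ∈ s, (-a p) ^ 4 from
              Finset.sum_congr rfl fun i _ => by ring,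
            show (-(∑ p ∈ s, a p)) = ∑ p ∈ s, -a p from (Finset.sum_neg_distrib _).symm]
        exact hcs
      have e1' : |-(∑ p ∈ s, a p)| ≤ 1/10 * Lfun x := by rwa [abs_neg]
      exact numeric_aux (Lfun x) _ _ _ eL e1' e2 e4 hcs'
  refine ⟨key, ?_, ?_⟩
  · apply Set.infinite_of_not_bddAbove
    rintro ⟨B, hB⟩
    obtain ⟨M, hM⟩ := eventually_atTop.1 key
    obtain ⟨p, hp, hpp, hpn⟩ := (hM (max M (B + 1)) (le_max_left _ _)).1
    have hxp := (Finset.mem_Ioc.1 hp).1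
    have h1 : p ≤ B := hB ⟨hpp, hpn⟩
    have h2 : B + 1 ≤ max M (B + 1) := le_max_right _ _
    omega
  · apply Set.infinite_of_not_bddAbove
    rintro ⟨B, hB⟩
    obtain ⟨M, hM⟩ := eventually_atTop.1 key
    obtain ⟨q, hq, hqq, hqn⟩ := (hM (max M (B + 1)) (le_max_left _ _)).2
    have hxq := (Finset.mem_Ioc.1 hq).1
    have h1 : q ≤ B := hB ⟨hqq, hqn⟩
    have h2 : B + 1 ≤ max M (B + 1) := le_max_right _ _
    omega
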